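/- Let M be a right cancellative monoid with choice of generators τ : X* → M. Then the syntactic monoid of the loop problem L_τ(M) is isomorphic to the inverse hull of M, i.e., the monoid of partial bijections of M generated by the right translations ρ_m : x ↦ xm and their relational inverses. -/

import Mathlib

open FreeMonoid

section LoopPrelude

variable {X M : Type*} [Monoid M]

def barW {X : Type*} (w : List (X ⊕ X)) : List (X ⊕ X) := (w.map Sum.swap).reverse

def posW {X : Type*} (u : List X) : List (X ⊕ X) := u.map Sum.inl

def negW {X : Type*} (v : List X) : List (X ⊕ X) := (v.map Sum.inr).reverse

inductive LStep (σ : FreeMonoid X →* M) : M → (X ⊕ X) → M → Prop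
  | posW (a : M) (x : X) : LStep σ a (Sum.inl x) (a * σ (of x))
  | negW (a : M) (x : X) : LStep σ (a * σ (of x)) (Sum.inr x) a

inductive LPath (σ : FreeMonoid X →* M) : M → List (X ⊕ X) → M → Prop
  | nil (a : M) : LPath σ a [] a
  | cons {a b c : M} {l : X ⊕ X} {w : List (X ⊕ X)}
      (h₁ : LStep σ a l b) (h₂ : LPath σ b w c) : LPath σ a (l :: w) c

def LoopProblem (σ : FreeMonoid X →* M) : Set (List (X ⊕ X)) := { w | LPath σ 1 w 1 }

end LoopPrelude

section SemiPrelude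

variable {X S : Type*} [Semigroup S]

def SLoopProblem (f : X → S) : Set (List (X ⊕ X)) :=
  LoopProblem (FreeMonoid.lift (fun x => (f x : WithOne S)))

end SemiPrelude


/-- The syntactic congruence of a language `L`. -/
def syntacticCon {A : Type*} (L : Set (List A)) : Con (FreeMonoid A) where
  r u v := ∀ x y : List A,
    x ++ FreeMonoid.toList u ++ y ∈ L ↔ x ++ FreeMonoid.toList v ++ y ∈ L
  iseqv := ⟨fun _ _ _ => Iff.rfl, fun h x y => (h x y).symm,
    fun h1 h2 x y => (h1 x y).trans (h2 x y)⟩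
  mul' := by
    intro a b c d h1 h2 x y
    simp only [FreeMonoid.toList_mul]
    calc x ++ (FreeMonoid.toList a ++ FreeMonoid.toList c) ++ y ∈ L
        ↔ x ++ FreeMonoid.toList a ++ (FreeMonoid.toList c ++ y) ∈ L := by
          simp only [List.append_assoc]
      _ ↔ x ++ FreeMonoid.toList b ++ (FreeMonoid.toList c ++ y) ∈ L := h1 _ _
      _ ↔ (x ++ FreeMonoid.toList b) ++ FreeMonoid.toList c ++ y ∈ L := by
          simp only [List.append_assoc]
      _ ↔ (x ++ FreeMonoid.toList b) ++ FreeMonoid.toList d ++ y ∈ L := h2 _ _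
      _ ↔ x ++ (FreeMonoid.toList b ++ FreeMonoid.toList d) ++ y ∈ L := by
          simp only [List.append_assoc]

/-- Partial maps on `M`. -/
def PMap (M : Type*) := M → Option M

instance {M : Type*} : Monoid (PMap M) where
  one := fun m => some m
  mul f g := fun m => (f m).bind g
  mul_assoc f g h := by
    funext m
    show ((f m).bind g).bind h = (f m).bind (fun x => (g x).bind h)
    cases f m <;> rfl
  one_mul f := by funext m; rfl
  mul_one f := by
    funext m
    show (f m).bind some = f m
    cases f m <;> rfl

/-- Right translation by `m`, as a partial map. -/
def rho {M : Type*} [Monoid M] (m : M) : PMap M := fun x => some (x * m)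

open Classical in
/-- The relational inverse of the right translation by `m`. -/
noncomputable def rhoInv {M : Type*} [Monoid M] (m : M) : PMap M :=
  fun y => if h : ∃ x : M, x * m = y then some h.choose else none

/-- The inverse hull of a (right cancellative) monoid `M`: the submonoid of the
monoid of partial maps of `M` generated by the right translations and their
relational inverses. -/
noncomputable def inverseHull (M : Type*) [Monoid M] : Submonoid (PMap M) :=
  Submonoid.closure (Set.range (rho (M := M)) ∪ Set.range (rhoInv (M := M)))

section AuxProof

open FreeMonoid

variable {X M : Type*} [Monoid M]

lemma PMap.mul_apply (f g : PMap M) (a : M) : (f * g) a = (f a).bind g := rfl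

lemma PMap.one_apply (a : M) : (1 : PMap M) a = some a := rfl

lemma rhoInv_eq_some [IsRightCancelMul M] (m y x : M) :
    rhoInv m y = some x ↔ x * m = y := by
  unfold rhoInv
  split_ifs with h
  · constructor
    · intro hx
      rw [Option.some_inj] at hx
      rw [← hx]; exact h.choose_spec
    · intro hx
      rw [Option.some_inj]
      exact mul_right_cancel (h.choose_spec.trans hx.symm)
  · constructor
    · intro hx; cases hx
    · intro hx; exact absurd ⟨x, hx⟩ h

/-- The action of a single letter. -/
noncomputable def lAct (τ : FreeMonoid X →* M) : (X ⊕ X) → PMap M :=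
  Sum.elim (fun x => rho (τ (of x))) (fun x => rhoInv (τ (of x)))

/-- The canonical hom to partial maps. -/
noncomputable def phi (τ : FreeMonoid X →* M) : FreeMonoid (X ⊕ X) →* PMap M :=
  FreeMonoid.lift (lAct τ)

variable (τ : FreeMonoid X →* M)

lemma lstep_iff [IsRightCancelMul M] {a b : M} {l : X ⊕ X} :
    LStep τ a l b ↔ lAct τ l a = some b := by
  cases l with
  | inl x =>
    simp only [lAct, Sum.elim_inl, rho, Option.some_inj]
    constructor
    · intro h; cases h; rfl
    · rintro rfl; exact LStep.posW a x
  | inr x =>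
    simp only [lAct, Sum.elim_inr]
    rw [rhoInv_eq_some]
    constructor
    · intro h; cases h; rfl
    · rintro rfl; exact LStep.negW b x

lemma lpath_iff [IsRightCancelMul M] {c : M} {w : List (X ⊕ X)} :
    ∀ {a : M}, LPath τ a w c ↔ (w.map (lAct τ)).prod a = some c := by
  induction w with
  | nil =>
    intro a
    constructor
    · intro h; cases h; rfl
    · intro h
      have : a = c := Option.some.inj h
      subst this; exact LPath.nil a
  | cons l w ih =>
    intro a
    erw [List.map_cons, List.prod_cons, PMap.mul_apply, Option.bind_eq_some_iff]
    constructor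
    · intro h
      cases h with
      | cons h₁ h₂ => exact ⟨_, (lstep_iff τ).mp h₁, ih.mp h₂⟩
    · rintro ⟨b, h₁, h₂⟩
      exact LPath.cons ((lstep_iff τ).mpr h₁) (ih.mpr h₂)

lemma mem_loop [IsRightCancelMul M] (w : List (X ⊕ X)) :
    w ∈ LoopProblem τ ↔ (w.map (lAct τ)).prod 1 = some 1 :=
  lpath_iff τ

lemma phi_posW (p : List X) :
    ∀ a : M, ((posW p).map (lAct τ)).prod a = some (a * τ (ofList p)) := by
  induction p with
  | nil =>
    intro a
    simp [posW, PMap.one_apply, ofList_nil]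
  | cons x p ih =>
    intro a
    erw [show posW (x :: p) = Sum.inl x :: posW p from rfl, List.map_cons, List.prod_cons,
      PMap.mul_apply, show lAct τ (Sum.inl x) a = some (a * τ (of x)) from rfl,
      Option.bind_some, ih, ofList_cons, map_mul, mul_assoc]

lemma phi_negW [IsRightCancelMul M] (p : List X) :
    ∀ y a : M, (((negW p).map (lAct τ)).prod y = some a ↔ a * τ (ofList p) = y) := by
  induction p with
  | nil =>
    intro y a
    simp only [negW, List.map_nil, List.reverse_nil, List.prod_nil, PMap.one_apply,
      Option.some_inj, ofList_nil, map_one, mul_one]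
    exact eq_comm
  | cons x p ih =>
    intro y a
    have hne : negW (x :: p) = negW p ++ [Sum.inr x] := by
      simp [negW]
    erw [hne, List.map_append, List.prod_append, PMap.mul_apply, Option.bind_eq_some_iff]
    simp only [List.map_cons, List.map_nil, List.prod_cons, List.prod_nil, mul_one]
    constructor
    · rintro ⟨z, hz, ha⟩
      rw [ih] at hz
      rw [show lAct τ (Sum.inr x) = rhoInv (τ (of x)) from rfl, rhoInv_eq_some] at ha
      rw [ofList_cons, map_mul, ← mul_assoc, ha, hz]
    · intro h
      refine ⟨a * τ (of x), (ih y _).mpr ?_, ?_⟩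
      · rw [mul_assoc, ← map_mul, ← ofList_cons]; exact h
      · rw [show lAct τ (Sum.inr x) = rhoInv (τ (of x)) from rfl, rhoInv_eq_some]

lemma key [IsRightCancelMul M] (hτ : Function.Surjective τ) {U V : List (X ⊕ X)}
    (h : ∀ x y : List (X ⊕ X),
      x ++ U ++ y ∈ LoopProblem τ ↔ x ++ V ++ y ∈ LoopProblem τ)
    {m k : M} (hk : (U.map (lAct τ)).prod m = some k) :
    (V.map (lAct τ)).prod m = some k := by
  obtain ⟨p, hp⟩ := hτ m
  obtain ⟨q, hq⟩ := hτ k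
  have hin : posW (toList p) ++ U ++ negW (toList q) ∈ LoopProblem τ := by
    rw [mem_loop]
    rw [List.map_append, List.map_append, List.prod_append, List.prod_append,
      PMap.mul_apply, PMap.mul_apply, phi_posW, ofList_toList, hp, one_mul,
      Option.bind_some (f := (List.map (lAct τ) U).prod), hk, Option.bind_some (f := (List.map (lAct τ) (negW (toList q))).prod), phi_negW, ofList_toList, hq, one_mul]
  rw [h] at hin
  rw [mem_loop, List.map_append, List.map_append, List.prod_append, List.prod_append,
    PMap.mul_apply, PMap.mul_apply, phi_posW, ofList_toList, hp, one_mul,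
    Option.bind_some (f := (List.map (lAct τ) V).prod)] at hin
  rcases hV : (V.map (lAct τ)).prod m with _ | k'
  · rw [hV] at hin; cases hin
  · rw [hV, Option.bind_some (f := (List.map (lAct τ) (negW (toList q))).prod), phi_negW, ofList_toList, hq, one_mul] at hin
    rw [hin]

lemma con_eq [IsRightCancelMul M] (hτ : Function.Surjective τ) :
    syntacticCon (LoopProblem τ) = Con.ker (phi τ) := by
  apply Con.ext
  intro u v
  rw [Con.ker_rel]
  have hu : phi τ u = ((toList u).map (lAct τ)).prod := FreeMonoid.lift_apply _ _
  have hv : phi τ v = ((toList v).map (lAct τ)).prod := FreeMonoid.lift_apply _ _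
  constructor
  · intro h
    rw [hu, hv]
    funext m
    have h' : ∀ x y : List (X ⊕ X),
        x ++ toList u ++ y ∈ LoopProblem τ ↔ x ++ toList v ++ y ∈ LoopProblem τ :=
      fun x y => h x y
    rcases h1 : ((toList u).map (lAct τ)).prod m with _ | k
    · rcases h2 : ((toList v).map (lAct τ)).prod m with _ | k'
      · rfl
      · have := key τ hτ (fun x y => (h' x y).symm) h2
        rw [h1] at this; cases this
    · rw [key τ hτ h' h1]
  · intro h x y
    have hp : ((toList u).map (lAct τ)).prod = ((toList v).map (lAct τ)).prod := by
      rw [← hu, ← hv, h]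
    show x ++ toList u ++ y ∈ LoopProblem τ ↔ x ++ toList v ++ y ∈ LoopProblem τ
    rw [mem_loop, mem_loop, List.map_append, List.map_append, List.map_append,
      List.map_append, List.prod_append, List.prod_append, List.prod_append,
      List.prod_append, hp]

lemma range_eq [IsRightCancelMul M] (hτ : Function.Surjective τ) :
    MonoidHom.mrange (phi τ) = inverseHull M := by
  apply le_antisymm
  · rintro f ⟨w, rfl⟩
    rw [show phi τ w = ((toList w).map (lAct τ)).prod from FreeMonoid.lift_apply _ _]
    induction toList w with
    | nil => exact one_mem _
    | cons l t ih =>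
      rw [List.map_cons, List.prod_cons]
      refine mul_mem (Submonoid.subset_closure ?_) ih
      cases l with
      | inl x => exact Or.inl ⟨τ (of x), rfl⟩
      | inr x => exact Or.inr ⟨τ (of x), rfl⟩
  · rw [inverseHull]
    apply Submonoid.closure_le.mpr
    rintro f (⟨m, rfl⟩ | ⟨m, rfl⟩)
    · obtain ⟨p, hp⟩ := hτ m
      refine ⟨ofList (posW (toList p)), ?_⟩
      rw [show phi τ (ofList (posW (toList p)))
            = ((toList (ofList (posW (toList p)))).map (lAct τ)).prod
          from FreeMonoid.lift_apply _ _, toList_ofList]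
      funext a
      rw [phi_posW, ofList_toList, hp]
      rfl
    · obtain ⟨p, hp⟩ := hτ m
      refine ⟨ofList (negW (toList p)), ?_⟩
      rw [show phi τ (ofList (negW (toList p)))
            = ((toList (ofList (negW (toList p)))).map (lAct τ)).prod
          from FreeMonoid.lift_apply _ _, toList_ofList]
      funext y
      rcases hy : rhoInv m y with _ | a
      · rcases hL : ((negW (toList p)).map (lAct τ)).prod y with _ | a
        · rfl
        · rw [phi_negW, ofList_toList, hp] at hL
          rw [← rhoInv_eq_some m y a] at hL
          rw [hL] at hy; cases hy
      · rw [rhoInv_eq_some] at hy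
        rw [phi_negW, ofList_toList, hp]
        exact hy

end AuxProof

theorem syntactic_monoid_is_inverse_hull {X M : Type*} [Monoid M] [IsRightCancelMul M]
    (τ : FreeMonoid X →* M) (hτ : Function.Surjective τ) :
    Nonempty ((syntacticCon (LoopProblem τ)).Quotient ≃* (inverseHull M)) :=
  ⟨(Con.congr (MulEquiv.refl _) (by rw [con_eq τ hτ]; rfl)).trans
    ((Con.quotientKerEquivRange (phi τ)).trans (MulEquiv.submonoidCongr (range_eq τ hτ)))⟩
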